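/- arXiv:2604.03663 — 3 statements merged into one kernel-verified Lean document; each statement's English description precedes it below -/
import Mathlib

section
/- Let m ≥ 1 and T ≥ 2 be integers. For μ = (μ₁,…,μ_m) ∈ ℝ^m define (ψ_h(μ))_{h≥0} by ψ₀(μ) = 1 and ψ_h(μ) = ∑_{l=1}^{min(m,h)} μ_l ψ_{h−l}(μ), and define (p_t(μ))_{t≥1} by p_t(μ) = ∑_{l=1}^{t−1} μ_l p_{t−l}(μ) + t·μ_t for 1 ≤ t ≤ m (the sum being empty for t = 1) and p_t(μ) = ∑_{l=1}^m μ_l p_{t−l}(μ) for t > m. Then for every k ∈ {1,…,m} and every μ ∈ ℝ^m, the partial derivative with respect to μ_k of the function μ ↦ ∑_{t=1}^{T−1} ((T−t)/t)·p_t(μ) exists and equals ∑_{h=0}^{T−1−k} (T−k−h)·ψ_h(μ), where the right-hand sum is interpreted as 0 when k > T−1. -/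
open Finset

/-- Power sums in terms of MA coefficients: `p_s = ∑ l, l·μ_l·ψ_{s-l}`. -/
private lemma auxA (m : ℕ) (ψ p : (ℕ → ℝ) → ℕ → ℝ)
    (hψ0 : ∀ μ : ℕ → ℝ, ψ μ 0 = 1)
    (hψ : ∀ (μ : ℕ → ℝ) (h : ℕ), 1 ≤ h →
      ψ μ h = ∑ l ∈ Finset.Icc 1 (min m h), μ l * ψ μ (h - l))
    (hp1 : ∀ (μ : ℕ → ℝ) (t : ℕ), 1 ≤ t → t ≤ m →
      p μ t = ∑ l ∈ Finset.Icc 1 (t - 1), μ l * p μ (t - l) + (t : ℝ) * μ t)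
    (hp2 : ∀ (μ : ℕ → ℝ) (t : ℕ), m < t →
      p μ t = ∑ l ∈ Finset.Icc 1 m, μ l * p μ (t - l))
    (μ : ℕ → ℝ) :
    ∀ s, 1 ≤ s → p μ s = ∑ l ∈ Finset.Icc 1 (min m s), (l : ℝ) * μ l * ψ μ (s - l) := by
  intro s
  induction s using Nat.strong_induction_on with
  | _ s ih =>
  intro hs
  by_cases hsm : s ≤ m
  · rw [hp1 μ s hs hsm]
    have h1 : ∀ l ∈ Finset.Icc 1 (s - 1), μ l * p μ (s - l)
        = ∑ j ∈ Finset.Icc 1 (s - l), μ l * ((j : ℝ) * μ j * ψ μ (s - l - j)) := by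
      intro l hl
      simp only [mem_Icc] at hl
      have hmin : min m (s - l) = s - l := by omega
      rw [ih (s - l) (by omega) (by omega), hmin, Finset.mul_sum]
    rw [Finset.sum_congr rfl h1]
    rw [Finset.sum_comm' (t' := Finset.Icc 1 (s - 1))
        (s' := fun j => Finset.Icc 1 (s - j))
        (fun l j => by simp only [mem_Icc]; omega)]
    have h2 : ∀ j ∈ Finset.Icc 1 (s - 1),
        (∑ l ∈ Finset.Icc 1 (s - j), μ l * ((j : ℝ) * μ j * ψ μ (s - l - j)))
        = (j : ℝ) * μ j * ψ μ (s - j) := by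
      intro j hj
      simp only [mem_Icc] at hj
      rw [hψ μ (s - j) (by omega)]
      have hmin : min m (s - j) = s - j := by omega
      rw [hmin, Finset.mul_sum]
      apply Finset.sum_congr rfl
      intro l hl
      have hll : s - l - j = s - j - l := by omega
      rw [hll]; ring
    rw [Finset.sum_congr rfl h2]
    have hmin2 : min m s = s := by omega
    rw [hmin2]
    have hstep := Finset.sum_Icc_succ_top (a := 1) (b := s - 1) (by omega)
      (fun j => (j : ℝ) * μ j * ψ μ (s - j))
    have hs1 : s - 1 + 1 = s := by omega
    rw [hs1] at hstep
    rw [hstep, Nat.sub_self, hψ0]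
    ring
  · rw [hp2 μ s (by omega)]
    have h1 : ∀ l ∈ Finset.Icc 1 m, μ l * p μ (s - l)
        = ∑ j ∈ Finset.Icc 1 (min m (s - l)), μ l * ((j : ℝ) * μ j * ψ μ (s - l - j)) := by
      intro l hl
      simp only [mem_Icc] at hl
      rw [ih (s - l) (by omega) (by omega), Finset.mul_sum]
    rw [Finset.sum_congr rfl h1]
    rw [Finset.sum_comm' (t' := Finset.Icc 1 m)
        (s' := fun j => Finset.Icc 1 (min m (s - j)))
        (fun l j => by
          simp only [mem_Icc, le_min_iff]
          omega)]
    have h2 : ∀ j ∈ Finset.Icc 1 m,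
        (∑ l ∈ Finset.Icc 1 (min m (s - j)), μ l * ((j : ℝ) * μ j * ψ μ (s - l - j)))
        = (j : ℝ) * μ j * ψ μ (s - j) := by
      intro j hj
      simp only [mem_Icc] at hj
      rw [hψ μ (s - j) (by omega), Finset.mul_sum]
      apply Finset.sum_congr rfl
      intro l hl
      have hll : s - l - j = s - j - l := by omega
      rw [hll]; ring
    rw [Finset.sum_congr rfl h2]
    have hmin2 : min m s = m := by omega
    rw [hmin2]

/-- Derivative of the power sums: `∂p_t/∂μ_k = t·ψ_{t−k}` (zero for `t < k`). -/
private lemma auxB (m : ℕ) (ψ p : (ℕ → ℝ) → ℕ → ℝ)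
    (hψ0 : ∀ μ : ℕ → ℝ, ψ μ 0 = 1)
    (hψ : ∀ (μ : ℕ → ℝ) (h : ℕ), 1 ≤ h →
      ψ μ h = ∑ l ∈ Finset.Icc 1 (min m h), μ l * ψ μ (h - l))
    (hp1 : ∀ (μ : ℕ → ℝ) (t : ℕ), 1 ≤ t → t ≤ m →
      p μ t = ∑ l ∈ Finset.Icc 1 (t - 1), μ l * p μ (t - l) + (t : ℝ) * μ t)
    (hp2 : ∀ (μ : ℕ → ℝ) (t : ℕ), m < t →
      p μ t = ∑ l ∈ Finset.Icc 1 m, μ l * p μ (t - l))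
    (k : ℕ) (hk1 : 1 ≤ k) (hkm : k ≤ m) (μ : ℕ → ℝ) :
    ∀ t, 1 ≤ t → HasDerivAt (fun x => p (Function.update μ k x) t)
      (if k ≤ t then (t : ℝ) * ψ μ (t - k) else 0) (μ k) := by
  -- derivative of the coordinate functions
  have hu : ∀ l : ℕ, HasDerivAt (fun x : ℝ => Function.update μ k x l)
      (if l = k then 1 else 0) (μ k) := by
    intro l
    rcases eq_or_ne l k with h | h
    · subst h
      simp only [if_pos rfl]
      have : (fun x : ℝ => Function.update μ l x l) = fun x => x := by
        funext x; simp
      rw [this]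
      exact hasDerivAt_id _
    · have : (fun x : ℝ => Function.update μ k x l) = fun _ => μ l := by
        funext x; simp [Function.update_of_ne h]
      rw [this, if_neg h]
      exact hasDerivAt_const _ _
  intro t
  induction t using Nat.strong_induction_on with
  | _ t ih =>
  intro ht
  by_cases htm : t ≤ m
  · -- case t ≤ m
    have hfun : (fun x => p (Function.update μ k x) t)
        = fun x => (∑ l ∈ Finset.Icc 1 (t - 1),
            (Function.update μ k x) l * p (Function.update μ k x) (t - l))
          + (t : ℝ) * (Function.update μ k x) t :=
      funext fun x => hp1 _ t ht htm
    rw [hfun]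
    have hterm : ∀ l ∈ Finset.Icc 1 (t - 1),
        HasDerivAt (fun x => (Function.update μ k x) l * p (Function.update μ k x) (t - l))
          ((if l = k then 1 else 0) * p μ (t - l)
            + μ l * (if k ≤ t - l then ((t - l : ℕ) : ℝ) * ψ μ (t - l - k) else 0)) (μ k) := by
      intro l hl
      simp only [mem_Icc] at hl
      have hd := (hu l).fun_mul (ih (t - l) (by omega) (by omega))
      simpa [Function.update_eq_self] using hd
    have hsum := HasDerivAt.fun_sum hterm
    have hlast := (hu t).const_mul (t : ℝ)
    have hD := hsum.add hlast
    refine hD.congr_deriv ?_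
    symm
    -- algebra
    rw [Finset.sum_add_distrib]
    have hδ : (∑ l ∈ Finset.Icc 1 (t - 1), (if l = k then 1 else 0) * p μ (t - l))
        = if k ∈ Finset.Icc 1 (t - 1) then p μ (t - k) else 0 := by
      simp only [ite_mul, one_mul, zero_mul]
      exact Finset.sum_ite_eq' _ _ _
    rw [hδ]
    rcases lt_trichotomy t k with hlt | heq | hgt
    · -- t < k
      rw [if_neg (show ¬ k ≤ t by omega),
        if_neg (show k ∉ Finset.Icc 1 (t - 1) by simp only [mem_Icc]; omega),
        if_neg (show ¬ t = k by omega)]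
      have : ∀ l ∈ Finset.Icc 1 (t - 1),
          μ l * (if k ≤ t - l then ((t - l : ℕ) : ℝ) * ψ μ (t - l - k) else 0) = 0 := by
        intro l hl
        simp only [mem_Icc] at hl
        rw [if_neg (by omega), mul_zero]
      rw [Finset.sum_eq_zero this]
      simp
    · -- t = k
      rw [if_pos (show k ≤ t by omega),
        if_neg (show k ∉ Finset.Icc 1 (t - 1) by simp only [mem_Icc]; omega),
        if_pos (show t = k from heq), show t - k = 0 by omega, hψ0]
      have : ∀ l ∈ Finset.Icc 1 (t - 1),
          μ l * (if k ≤ t - l then ((t - l : ℕ) : ℝ) * ψ μ (t - l - k) else 0) = 0 := by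
        intro l hl
        simp only [mem_Icc] at hl
        rw [if_neg (by omega), mul_zero]
      rw [Finset.sum_eq_zero this]
      ring
    · -- t > k
      rw [if_pos (show k ≤ t by omega),
        if_pos (show k ∈ Finset.Icc 1 (t - 1) by simp only [mem_Icc]; omega),
        if_neg (show ¬ t = k by omega)]
      have hsub : (∑ l ∈ Finset.Icc 1 (t - 1),
          μ l * (if k ≤ t - l then ((t - l : ℕ) : ℝ) * ψ μ (t - l - k) else 0))
          = ∑ l ∈ Finset.Icc 1 (t - k), μ l * (((t : ℝ) - l) * ψ μ (t - k - l)) := by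
        rw [← Finset.sum_subset (Finset.Icc_subset_Icc_right (by omega : t - k ≤ t - 1))]
        · apply Finset.sum_congr rfl
          intro l hl
          simp only [mem_Icc] at hl
          rw [if_pos (by omega)]
          have h1 : ((t - l : ℕ) : ℝ) = (t : ℝ) - l := by
            have : l ≤ t := by omega
            push_cast [this]; ring
          have h2 : t - l - k = t - k - l := by omega
          rw [h1, h2]
        · intro l hl hl'
          simp only [mem_Icc] at hl hl'
          rw [if_neg (by omega), mul_zero]
      rw [hsub]
      have hexp : ∀ l ∈ Finset.Icc 1 (t - k),
          μ l * (((t : ℝ) - l) * ψ μ (t - k - l))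
          = (t : ℝ) * (μ l * ψ μ (t - k - l)) - (l : ℝ) * μ l * ψ μ (t - k - l) := by
        intro l _; ring
      rw [Finset.sum_congr rfl hexp, Finset.sum_sub_distrib, ← Finset.mul_sum]
      have hmin : min m (t - k) = t - k := by omega
      have hψs : ψ μ (t - k) = ∑ l ∈ Finset.Icc 1 (t - k), μ l * ψ μ (t - k - l) := by
        rw [hψ μ (t - k) (by omega), hmin]
      have hpA : p μ (t - k) = ∑ l ∈ Finset.Icc 1 (t - k), (l : ℝ) * μ l * ψ μ (t - k - l) := by
        rw [auxA m ψ p hψ0 hψ hp1 hp2 μ (t - k) (by omega), hmin]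
      rw [hψs, hpA]
      ring
  · -- case t > m
    have hfun : (fun x => p (Function.update μ k x) t)
        = fun x => ∑ l ∈ Finset.Icc 1 m,
            (Function.update μ k x) l * p (Function.update μ k x) (t - l) :=
      funext fun x => hp2 _ t (by omega)
    rw [hfun]
    have hterm : ∀ l ∈ Finset.Icc 1 m,
        HasDerivAt (fun x => (Function.update μ k x) l * p (Function.update μ k x) (t - l))
          ((if l = k then 1 else 0) * p μ (t - l)
            + μ l * (if k ≤ t - l then ((t - l : ℕ) : ℝ) * ψ μ (t - l - k) else 0)) (μ k) := by
      intro l hl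
      simp only [mem_Icc] at hl
      have hd := (hu l).fun_mul (ih (t - l) (by omega) (by omega))
      simpa [Function.update_eq_self] using hd
    have hD := HasDerivAt.fun_sum hterm
    refine hD.congr_deriv ?_
    symm
    rw [Finset.sum_add_distrib]
    have hδ : (∑ l ∈ Finset.Icc 1 m, (if l = k then 1 else 0) * p μ (t - l))
        = if k ∈ Finset.Icc 1 m then p μ (t - k) else 0 := by
      simp only [ite_mul, one_mul, zero_mul]
      exact Finset.sum_ite_eq' _ _ _
    rw [hδ, if_pos (show k ∈ Finset.Icc 1 m by simp only [mem_Icc]; omega),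
      if_pos (show k ≤ t by omega)]
    have hsub : (∑ l ∈ Finset.Icc 1 m,
        μ l * (if k ≤ t - l then ((t - l : ℕ) : ℝ) * ψ μ (t - l - k) else 0))
        = ∑ l ∈ Finset.Icc 1 (min m (t - k)), μ l * (((t : ℝ) - l) * ψ μ (t - k - l)) := by
      rw [← Finset.sum_subset (Finset.Icc_subset_Icc_right (min_le_left _ _))]
      · apply Finset.sum_congr rfl
        intro l hl
        simp only [mem_Icc, le_min_iff] at hl
        rw [if_pos (by omega)]
        have h1 : ((t - l : ℕ) : ℝ) = (t : ℝ) - l := by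
          have : l ≤ t := by omega
          push_cast [this]; ring
        have h2 : t - l - k = t - k - l := by omega
        rw [h1, h2]
      · intro l hl hl'
        simp only [mem_Icc, le_min_iff] at hl hl'
        rw [if_neg (by omega), mul_zero]
    rw [hsub]
    have hexp : ∀ l ∈ Finset.Icc 1 (min m (t - k)),
        μ l * (((t : ℝ) - l) * ψ μ (t - k - l))
        = (t : ℝ) * (μ l * ψ μ (t - k - l)) - (l : ℝ) * μ l * ψ μ (t - k - l) := by
      intro l _; ring
    rw [Finset.sum_congr rfl hexp, Finset.sum_sub_distrib, ← Finset.mul_sum]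
    rw [← hψ μ (t - k) (by omega), ← auxA m ψ p hψ0 hψ hp1 hp2 μ (t - k) (by omega)]
    ring

/-- Gradient of the log of the bias-reducing Prior AR(m). -/
theorem prior_ARm_gradient (m T : ℕ) (hm : 1 ≤ m) (hT : 2 ≤ T)
    (ψ p : (ℕ → ℝ) → ℕ → ℝ)
    (hψ0 : ∀ μ : ℕ → ℝ, ψ μ 0 = 1)
    (hψ : ∀ (μ : ℕ → ℝ) (h : ℕ), 1 ≤ h →
      ψ μ h = ∑ l ∈ Finset.Icc 1 (min m h), μ l * ψ μ (h - l))
    (hp1 : ∀ (μ : ℕ → ℝ) (t : ℕ), 1 ≤ t → t ≤ m →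
      p μ t = ∑ l ∈ Finset.Icc 1 (t - 1), μ l * p μ (t - l) + (t : ℝ) * μ t)
    (hp2 : ∀ (μ : ℕ → ℝ) (t : ℕ), m < t →
      p μ t = ∑ l ∈ Finset.Icc 1 m, μ l * p μ (t - l))
    (k : ℕ) (hk1 : 1 ≤ k) (hkm : k ≤ m) (μ : ℕ → ℝ) :
    HasDerivAt
      (fun x : ℝ =>
        ∑ t ∈ Finset.Icc 1 (T - 1), (((T : ℝ) - t) / t) * p (Function.update μ k x) t)
      (∑ h ∈ Finset.range (T - k), ((T : ℝ) - k - h) * ψ μ h) (μ k) := by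
  have hterm : ∀ t ∈ Finset.Icc 1 (T - 1),
      HasDerivAt (fun x : ℝ => (((T : ℝ) - t) / t) * p (Function.update μ k x) t)
        ((((T : ℝ) - t) / t) * (if k ≤ t then (t : ℝ) * ψ μ (t - k) else 0)) (μ k) := by
    intro t htmem
    simp only [mem_Icc] at htmem
    exact (auxB m ψ p hψ0 hψ hp1 hp2 k hk1 hkm μ t htmem.1).const_mul _
  have hD := HasDerivAt.fun_sum hterm
  refine hD.congr_deriv ?_
  symm
  have hval : ∀ t ∈ Finset.Icc 1 (T - 1),
      (((T : ℝ) - t) / t) * (if k ≤ t then (t : ℝ) * ψ μ (t - k) else 0)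
      = if k ≤ t then ((T : ℝ) - t) * ψ μ (t - k) else 0 := by
    intro t htmem
    simp only [mem_Icc] at htmem
    rcases le_or_gt k t with h | h
    · rw [if_pos h, if_pos h]
      have ht0 : (t : ℝ) ≠ 0 := by
        exact_mod_cast (show t ≠ 0 by omega)
      field_simp
    · rw [if_neg (by omega), if_neg (by omega), mul_zero]
  rw [Finset.sum_congr rfl hval]
  by_cases hkT : k ≤ T - 1
  · have hsub : (∑ t ∈ Finset.Icc 1 (T - 1),
        if k ≤ t then ((T : ℝ) - t) * ψ μ (t - k) else 0)
        = ∑ t ∈ Finset.Icc k (T - 1), ((T : ℝ) - t) * ψ μ (t - k) := by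
      rw [← Finset.sum_subset (Finset.Icc_subset_Icc_left hk1)]
      · exact Finset.sum_congr rfl fun t htmem => by
          simp only [mem_Icc] at htmem
          rw [if_pos htmem.1]
      · intro t htmem htmem'
        simp only [mem_Icc] at htmem htmem'
        rw [if_neg (by omega)]
    rw [hsub]
    have hIco : Finset.Icc k (T - 1) = Finset.Ico k T := by
      rw [← Finset.Ico_add_one_right_eq_Icc]
      congr 1
      omega
    rw [hIco, Finset.sum_Ico_eq_sum_range]
    apply Finset.sum_congr rfl
    intro h hh
    simp only [mem_range] at hh
    have h1 : k + h - k = h := by omega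
    rw [h1]
    push_cast
    ring
  · have hTk : T - k = 0 := by omega
    rw [hTk, Finset.range_zero, Finset.sum_empty]
    symm
    apply Finset.sum_eq_zero
    intro t htmem
    simp only [mem_Icc] at htmem
    rw [if_neg (by omega)]
end

section
/- Let m ≥ 1 be an integer. For μ = (μ₁,…,μ_m) ∈ ℝ^m define (ψ_h(μ))_{h≥0} by ψ₀(μ) = 1 and ψ_h(μ) = ∑_{l=1}^{min(m,h)} μ_l ψ_{h−l}(μ), and define (p_t(μ))_{t≥1} by p_t(μ) = ∑_{l=1}^{t−1} μ_l p_{t−l}(μ) + t·μ_t for 1 ≤ t ≤ m (the sum being empty for t = 1) and p_t(μ) = ∑_{l=1}^m μ_l p_{t−l}(μ) for t > m. Then for all integers t ≥ 1 and k ∈ {1,…,m}, the partial derivative ∂p_t/∂μ_k exists everywhere on ℝ^m and satisfies ∂p_t(μ)/∂μ_k = t·ψ_{t−k}(μ) if t ≥ k and ∂p_t(μ)/∂μ_k = 0 if t < k. -/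
open Finset

/-- Newton-type identity: `p μ s = ∑_{l=1}^{min(m,s)} l·μ_l·ψ_{s-l}(μ)`. -/
lemma power_sum_newton (m : ℕ) (ψ p : (ℕ → ℝ) → ℕ → ℝ)
    (hψ0 : ∀ μ : ℕ → ℝ, ψ μ 0 = 1)
    (hψ : ∀ (μ : ℕ → ℝ) (h : ℕ), 1 ≤ h →
      ψ μ h = ∑ l ∈ Finset.Icc 1 (min m h), μ l * ψ μ (h - l))
    (hp1 : ∀ (μ : ℕ → ℝ) (t : ℕ), 1 ≤ t → t ≤ m →
      p μ t = ∑ l ∈ Finset.Icc 1 (t - 1), μ l * p μ (t - l) + (t : ℝ) * μ t)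
    (hp2 : ∀ (μ : ℕ → ℝ) (t : ℕ), m < t →
      p μ t = ∑ l ∈ Finset.Icc 1 m, μ l * p μ (t - l))
    (μ : ℕ → ℝ) :
    ∀ s : ℕ, 1 ≤ s → p μ s = ∑ l ∈ Finset.Icc 1 (min m s), (l : ℝ) * μ l * ψ μ (s - l) := by
  intro s
  induction s using Nat.strong_induction_on with
  | _ s IH =>
    intro hs
    set n := min m (s - 1) with hn
    have hrec : p μ s = ∑ l ∈ Finset.Icc 1 n, μ l * p μ (s - l)
        + (if s ≤ m then (s : ℝ) * μ s else 0) := by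
      by_cases h : s ≤ m
      · rw [if_pos h, hp1 μ s hs h, hn, Nat.min_eq_right (by omega)]
      · rw [if_neg h, hp2 μ s (by omega), hn, Nat.min_eq_left (by omega), add_zero]
    have step1 : ∀ l ∈ Finset.Icc 1 n, μ l * p μ (s - l) =
        ∑ j ∈ Finset.Icc 1 n,
          (if l + j ≤ s then μ l * ((j : ℝ) * μ j * ψ μ (s - l - j)) else 0) := by
      intro l hl
      rw [Finset.mem_Icc] at hl
      have hl2 : l ≤ s - 1 := by omega
      rw [IH (s - l) (by omega) (by omega), Finset.mul_sum]
      have hsub : Finset.Icc 1 (min m (s - l)) ⊆ Finset.Icc 1 n :=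
        Finset.Icc_subset_Icc le_rfl (by omega)
      calc ∑ j ∈ Finset.Icc 1 (min m (s - l)), μ l * ((j : ℝ) * μ j * ψ μ (s - l - j))
          = ∑ j ∈ Finset.Icc 1 (min m (s - l)),
              (if l + j ≤ s then μ l * ((j : ℝ) * μ j * ψ μ (s - l - j)) else 0) := by
            apply Finset.sum_congr rfl
            intro j hj
            rw [Finset.mem_Icc] at hj
            rw [if_pos (by omega)]
        _ = ∑ j ∈ Finset.Icc 1 n,
              (if l + j ≤ s then μ l * ((j : ℝ) * μ j * ψ μ (s - l - j)) else 0) := by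
            apply Finset.sum_subset hsub
            intro j hj hj'
            rw [Finset.mem_Icc] at hj
            rw [Finset.mem_Icc, not_and_or, not_le, not_le] at hj'
            rw [if_neg (by omega)]
    have step2 : ∀ j ∈ Finset.Icc 1 n, ∑ l ∈ Finset.Icc 1 n,
        (if l + j ≤ s then μ l * ((j : ℝ) * μ j * ψ μ (s - l - j)) else 0)
        = (j : ℝ) * μ j * ψ μ (s - j) := by
      intro j hj
      rw [Finset.mem_Icc] at hj
      have hsj : 1 ≤ s - j := by omega
      have hsub : Finset.Icc 1 (min m (s - j)) ⊆ Finset.Icc 1 n :=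
        Finset.Icc_subset_Icc le_rfl (by omega)
      rw [hψ μ (s - j) hsj, Finset.mul_sum]
      rw [← Finset.sum_subset hsub ?vanish]
      · apply Finset.sum_congr rfl
        intro l hl
        rw [Finset.mem_Icc] at hl
        rw [if_pos (by omega)]
        have : s - l - j = s - j - l := by omega
        rw [this]; ring
      case vanish =>
        intro l hl hl'
        rw [Finset.mem_Icc] at hl
        rw [Finset.mem_Icc, not_and_or, not_le, not_le] at hl'
        rw [if_neg (by omega)]
    rw [hrec, Finset.sum_congr rfl step1, Finset.sum_comm, Finset.sum_congr rfl step2]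
    by_cases h : s ≤ m
    · have hmin : min m s = s := by omega
      have hn' : n = s - 1 := by omega
      obtain ⟨s', rfl⟩ : ∃ s', s = s' + 1 := ⟨s - 1, by omega⟩
      rw [hmin, hn', Finset.sum_Icc_succ_top (by omega : 1 ≤ s' + 1)]
      simp only [Nat.add_sub_cancel, Nat.sub_self, hψ0, if_pos h]
      ring
    · have hmin : min m s = m := by omega
      have hn' : n = m := by omega
      rw [hmin, hn', if_neg h, add_zero]

/-- Differentiation of the power sums with respect to the AR coefficients: with `ψ` the MA(∞)
coefficients and `p` the power sums (as functions of the AR coefficient vector `μ`, defined by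
their recursions), for all `t ≥ 1` and `k ∈ {1,…,m}` the partial derivative `∂p_t/∂μ_k`
exists everywhere and equals `t·ψ_{t−k}(μ)` if `t ≥ k`, and `0` if `t < k`. -/
theorem power_sum_partial_derivative (m : ℕ) (hm : 1 ≤ m)
    (ψ p : (ℕ → ℝ) → ℕ → ℝ)
    (hψ0 : ∀ μ : ℕ → ℝ, ψ μ 0 = 1)
    (hψ : ∀ (μ : ℕ → ℝ) (h : ℕ), 1 ≤ h →
      ψ μ h = ∑ l ∈ Finset.Icc 1 (min m h), μ l * ψ μ (h - l))
    (hp1 : ∀ (μ : ℕ → ℝ) (t : ℕ), 1 ≤ t → t ≤ m →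
      p μ t = ∑ l ∈ Finset.Icc 1 (t - 1), μ l * p μ (t - l) + (t : ℝ) * μ t)
    (hp2 : ∀ (μ : ℕ → ℝ) (t : ℕ), m < t →
      p μ t = ∑ l ∈ Finset.Icc 1 m, μ l * p μ (t - l))
    (t k : ℕ) (ht : 1 ≤ t) (hk1 : 1 ≤ k) (hkm : k ≤ m) (μ : ℕ → ℝ) :
    HasDerivAt (fun x : ℝ => p (Function.update μ k x) t)
      (if k ≤ t then (t : ℝ) * ψ μ (t - k) else 0) (μ k) := by
  classical
  -- basic derivative of coordinates
  have hν : ∀ l : ℕ, HasDerivAt (fun x : ℝ => Function.update μ k x l)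
      (if l = k then 1 else 0) (μ k) := by
    intro l
    rcases eq_or_ne l k with h | h
    · subst h
      simp only [if_pos rfl, Function.update_self]
      exact hasDerivAt_id _
    · simp only [if_neg h, Function.update_of_ne h]
      exact hasDerivAt_const _ _
  -- key algebraic identity derived from the Newton identity
  have hB : ∀ s : ℕ, 1 ≤ s → ∀ T : ℕ,
      p μ s + ∑ l ∈ Finset.Icc 1 (min m s), μ l * (((T : ℝ) - l) * ψ μ (s - l))
        = (T : ℝ) * ψ μ s := by
    intro s hs T
    rw [power_sum_newton m ψ p hψ0 hψ hp1 hp2 μ s hs, ← Finset.sum_add_distrib]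
    have : ∀ l ∈ Finset.Icc 1 (min m s),
        (l : ℝ) * μ l * ψ μ (s - l) + μ l * (((T : ℝ) - l) * ψ μ (s - l))
          = (T : ℝ) * (μ l * ψ μ (s - l)) := by
      intro l _; ring
    rw [Finset.sum_congr rfl this, ← Finset.mul_sum, ← hψ μ s hs]
  have key : ∀ t : ℕ, 1 ≤ t → HasDerivAt (fun x : ℝ => p (Function.update μ k x) t)
      (if k ≤ t then (t : ℝ) * ψ μ (t - k) else 0) (μ k) := by
    intro t
    induction t using Nat.strong_induction_on with
    | _ t IH =>
      intro ht
      set n := min m (t - 1) with hn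
      have hrec : (fun x : ℝ => p (Function.update μ k x) t)
          = fun x : ℝ => (∑ l ∈ Finset.Icc 1 n,
              Function.update μ k x l * p (Function.update μ k x) (t - l))
            + (if t ≤ m then (t : ℝ) * Function.update μ k x t else 0) := by
        funext x
        by_cases h : t ≤ m
        · rw [if_pos h, hp1 _ t ht h, hn, Nat.min_eq_right (by omega)]
        · rw [if_neg h, hp2 _ t (by omega), hn, Nat.min_eq_left (by omega), add_zero]
      rw [hrec]
      have hsum : HasDerivAt (fun x : ℝ => ∑ l ∈ Finset.Icc 1 n,
            Function.update μ k x l * p (Function.update μ k x) (t - l))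
          (∑ l ∈ Finset.Icc 1 n, ((if l = k then (1 : ℝ) else 0) * p μ (t - l)
            + μ l * (if k ≤ t - l then ((t - l : ℕ) : ℝ) * ψ μ (t - l - k) else 0))) (μ k) := by
        apply HasDerivAt.fun_sum
        intro l hl
        rw [Finset.mem_Icc] at hl
        have h1 : t - l < t := by omega
        have h2 : 1 ≤ t - l := by omega
        have := (hν l).fun_mul (IH (t - l) h1 h2)
        simpa [Function.update_eq_self] using this
      have hextra : HasDerivAt (fun x : ℝ => if t ≤ m then (t : ℝ) * Function.update μ k x t else 0)
          (if t ≤ m then (t : ℝ) * (if t = k then 1 else 0) else 0) (μ k) := by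
        by_cases h : t ≤ m
        · simp only [if_pos h]
          exact (hν t).const_mul _
        · simp only [if_neg h]
          exact hasDerivAt_const _ _
      have hEq : (∑ l ∈ Finset.Icc 1 n, ((if l = k then (1 : ℝ) else 0) * p μ (t - l)
            + μ l * (if k ≤ t - l then ((t - l : ℕ) : ℝ) * ψ μ (t - l - k) else 0)))
          + (if t ≤ m then (t : ℝ) * (if t = k then 1 else 0) else 0)
          = (if k ≤ t then (t : ℝ) * ψ μ (t - k) else 0) := by
        rcases lt_trichotomy t k with hlt | heqk | hgt
        · have h1 : ∀ l ∈ Finset.Icc 1 n, (if l = k then (1 : ℝ) else 0) * p μ (t - l)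
              + μ l * (if k ≤ t - l then ((t - l : ℕ) : ℝ) * ψ μ (t - l - k) else 0) = 0 := by
            intro l hl
            rw [Finset.mem_Icc] at hl
            rw [if_neg (by omega), if_neg (by omega)]
            ring
          rw [Finset.sum_eq_zero h1, if_neg (by omega : ¬ k ≤ t),
            if_neg (by omega : ¬ t = k), mul_zero, ite_self, add_zero]
        · have h1 : ∀ l ∈ Finset.Icc 1 n, (if l = k then (1 : ℝ) else 0) * p μ (t - l)
              + μ l * (if k ≤ t - l then ((t - l : ℕ) : ℝ) * ψ μ (t - l - k) else 0) = 0 := by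
            intro l hl
            rw [Finset.mem_Icc] at hl
            rw [if_neg (by omega), if_neg (by omega)]
            ring
          rw [Finset.sum_eq_zero h1, zero_add, if_pos (by omega : t ≤ m),
            if_pos heqk, if_pos (by omega : k ≤ t),
            show t - k = 0 from by omega, hψ0, mul_one]
        · -- k < t
          set s := t - k with hs
          have hs1 : 1 ≤ s := by omega
          have hE1 : ∑ l ∈ Finset.Icc 1 n, (if l = k then (1 : ℝ) else 0) * p μ (t - l)
              = p μ s := by
            have hcongr : ∀ l ∈ Finset.Icc 1 n, (if l = k then (1 : ℝ) else 0) * p μ (t - l)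
                = if l = k then p μ (t - l) else 0 := by
              intro l _
              split_ifs <;> simp
            rw [Finset.sum_congr rfl hcongr, Finset.sum_ite_eq' (Finset.Icc 1 n) k
              (fun l => p μ (t - l)), if_pos (by rw [Finset.mem_Icc]; omega)]
          have hE2 : ∑ l ∈ Finset.Icc 1 n,
              μ l * (if k ≤ t - l then ((t - l : ℕ) : ℝ) * ψ μ (t - l - k) else 0)
              = ∑ l ∈ Finset.Icc 1 (min m s), μ l * (((t : ℝ) - l) * ψ μ (s - l)) := by
            have hsub : Finset.Icc 1 (min m s) ⊆ Finset.Icc 1 n :=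
              Finset.Icc_subset_Icc le_rfl (by omega)
            rw [← Finset.sum_subset hsub ?vanish]
            · apply Finset.sum_congr rfl
              intro l hl
              rw [Finset.mem_Icc] at hl
              rw [if_pos (by omega), show t - l - k = s - l from by omega,
                Nat.cast_sub (by omega : l ≤ t)]
            case vanish =>
              intro l hl hl'
              rw [Finset.mem_Icc] at hl
              rw [Finset.mem_Icc, not_and_or, not_le, not_le] at hl'
              rw [if_neg (by omega), mul_zero]
          rw [Finset.sum_add_distrib, hE1, hE2, if_neg (by omega : ¬ t = k), mul_zero, ite_self, add_zero,
            if_pos (by omega : k ≤ t)]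
          exact hB s hs1 t
      rw [← hEq]
      exact hsum.add hextra
  exact key t ht
end

section
/- Let (Ω, F, P) be a probability space, let σ > 0, and let (ε_t)_{t∈ℤ} be an independent family of square-integrable real random variables with E[ε_t] = 0 and E[ε_t²] = σ² for every t. Let (ψ_h)_{h≥0} be real numbers with ∑_{h=0}^∞ ψ_h² < ∞, and for each s ∈ ℤ let Ỹ_s denote the L²(P)-limit of ∑_{h=0}^H ψ_h ε_{s−h} as H → ∞. Then for all integers T ≥ 1 and k ≥ 1, ∑_{t=1}^T ∑_{τ=1}^T E[Ỹ_{τ−k} · ε_t] = σ²·∑_{h=0}^{T−k−1} (T−k−h)·ψ_h, where the right-hand sum is interpreted as 0 when k ≥ T. -/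
open MeasureTheory ProbabilityTheory Filter Finset
open scoped ENNReal


lemma l2_mul_integrable {Ω : Type*} [MeasurableSpace Ω] {P : Measure Ω}
    {f g : Ω → ℝ} (hf : MemLp f 2 P) (hg : MemLp g 2 P) :
    Integrable (fun ω => f ω * g ω) P := by
  have h : MemLp (f • g) 1 P := hg.smul hf
  rw [← memLp_one_iff_integrable]
  exact h

lemma l2_abs_integral_mul_le {Ω : Type*} [MeasurableSpace Ω] {P : Measure Ω}
    {f g : Ω → ℝ} (hf : MemLp f 2 P) (hg : MemLp g 2 P) :
    |∫ ω, f ω * g ω ∂P| ≤ (eLpNorm f 2 P).toReal * (eLpNorm g 2 P).toReal := by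
  have hpq : (2 : ℝ).HolderConjugate 2 := Real.HolderConjugate.two_two
  have hf2 : MemLp f (ENNReal.ofReal (2:ℝ)) P := by simpa using hf
  have hg2 : MemLp g (ENNReal.ofReal (2:ℝ)) P := by simpa using hg
  have h2 := integral_mul_norm_le_Lp_mul_Lq hpq hf2 hg2
  have h1 : |∫ ω, f ω * g ω ∂P| ≤ ∫ ω, ‖f ω‖ * ‖g ω‖ ∂P := by
    calc |∫ ω, f ω * g ω ∂P| ≤ ∫ ω, ‖f ω * g ω‖ ∂P := by
          simpa [Real.norm_eq_abs] using
            norm_integral_le_integral_norm (fun ω => f ω * g ω) (μ := P)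
      _ = ∫ ω, ‖f ω‖ * ‖g ω‖ ∂P := by simp [norm_mul]
  have hfe : (eLpNorm f 2 P).toReal = (∫ ω, ‖f ω‖ ^ (2:ℝ) ∂P) ^ (1/(2:ℝ)) := by
    rw [hf.eLpNorm_eq_integral_rpow_norm two_ne_zero ENNReal.ofNat_ne_top,
      ENNReal.toReal_ofReal (by positivity)]
    norm_num
  have hge : (eLpNorm g 2 P).toReal = (∫ ω, ‖g ω‖ ^ (2:ℝ) ∂P) ^ (1/(2:ℝ)) := by
    rw [hg.eLpNorm_eq_integral_rpow_norm two_ne_zero ENNReal.ofNat_ne_top,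
      ENNReal.toReal_ofReal (by positivity)]
    norm_num
  rw [hfe, hge]
  exact h1.trans h2

/-- MA(∞) double-sum moment identity: with `(ε_t)_{t∈ℤ}` independent, square-integrable,
centered with common variance `σ²`, `(ψ_h)` square-summable, and `Ỹ_s` the `L²(P)`-limit of
the partial sums `∑_{h=0}^H ψ_h ε_{s−h}`, for all integers `T ≥ 1` and `k ≥ 1`,
`∑_{t=1}^T ∑_{τ=1}^T E[Ỹ_{τ−k}·ε_t] = σ²·∑_{h=0}^{T−k−1} (T−k−h)·ψ_h`
(the right-hand sum being `0` when `k ≥ T`). -/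
theorem ma_infty_double_sum_moment
    {Ω : Type*} [MeasurableSpace Ω] (P : Measure Ω) [IsProbabilityMeasure P]
    (σ : ℝ) (hσ : 0 < σ) (ε : ℤ → Ω → ℝ)
    (hmeas : ∀ t : ℤ, Measurable (ε t))
    (hindep : iIndepFun ε P)
    (hL2 : ∀ t : ℤ, MemLp (ε t) 2 P)
    (hmean : ∀ t : ℤ, ∫ ω, ε t ω ∂P = 0)
    (hvar : ∀ t : ℤ, ∫ ω, (ε t ω) ^ 2 ∂P = σ ^ 2)
    (ψ : ℕ → ℝ) (hψ : Summable (fun h : ℕ => ψ h ^ 2))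
    (Y : ℤ → Ω → ℝ) (hYL2 : ∀ s : ℤ, MemLp (Y s) 2 P)
    (hYlim : ∀ s : ℤ, Tendsto
      (fun H : ℕ =>
        eLpNorm (fun ω => (∑ h ∈ Finset.range (H + 1), ψ h * ε (s - h) ω) - Y s ω) 2 P)
      atTop (nhds 0))
    (T k : ℕ) (hT : 1 ≤ T) (hk : 1 ≤ k) :
    ∑ t ∈ Finset.Icc (1 : ℤ) T, ∑ τ ∈ Finset.Icc (1 : ℤ) T,
        ∫ ω, Y (τ - k) ω * ε t ω ∂P =
      σ ^ 2 * ∑ h ∈ Finset.range (T - k), ((T : ℝ) - k - h) * ψ h := by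
  -- cross moments of the noise
  have hcross : ∀ s t : ℤ, ∫ ω, ε s ω * ε t ω ∂P = if s = t then σ ^ 2 else 0 := by
    intro s t
    by_cases h : s = t
    · subst h
      rw [if_pos rfl, ← hvar s]
      exact integral_congr_ae (Eventually.of_forall fun ω => by show ε s ω * ε s ω = ε s ω ^ 2; ring)
    · rw [if_neg h]
      have hind : IndepFun (ε s) (ε t) P := hindep.indepFun h
      have := hind.integral_mul_eq_mul_integral ((hL2 s).integrable one_le_two).aestronglyMeasurable
        ((hL2 t).integrable one_le_two).aestronglyMeasurable
      simpa [hmean s, Pi.mul_apply] using this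
  -- partial sums
  set S : ℤ → ℕ → Ω → ℝ := fun s H ω => ∑ h ∈ Finset.range (H + 1), ψ h * ε (s - h) ω with hS
  have hSmem : ∀ s H, MemLp (S s H) 2 P := by
    intro s H
    have := memLp_finset_sum (Finset.range (H + 1))
      (fun (h : ℕ) (_ : h ∈ Finset.range (H + 1)) => (hL2 (s - (h : ℤ))).const_mul (ψ h))
    simpa [hS] using this
  have hSint : ∀ s t : ℤ, ∀ H : ℕ, ∫ ω, S s H ω * ε t ω ∂P =
      ∑ h ∈ Finset.range (H + 1), ψ h * (if (s - (h : ℤ)) = t then σ ^ 2 else 0) := by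
    intro s t H
    have heq : ∀ ω, S s H ω * ε t ω =
        ∑ h ∈ Finset.range (H + 1), ψ h * (ε (s - h) ω * ε t ω) := by
      intro ω
      rw [hS]
      simp only [Finset.sum_mul, mul_assoc]
    rw [integral_congr_ae (Eventually.of_forall heq), integral_finset_sum _
      (fun (h : ℕ) _ => (l2_mul_integrable (hL2 (s - (h : ℤ))) (hL2 t)).const_mul (ψ h))]
    exact Finset.sum_congr rfl fun h _ => by rw [integral_const_mul, hcross]
  -- key single moment identity
  have hYeps : ∀ s t : ℤ, ∫ ω, Y s ω * ε t ω ∂P =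
      if t ≤ s then σ ^ 2 * ψ (s - t).toNat else 0 := by
    intro s t
    have hconv : Tendsto (fun H : ℕ => ∫ ω, S s H ω * ε t ω ∂P) atTop
        (nhds (∫ ω, Y s ω * ε t ω ∂P)) := by
      rw [tendsto_iff_dist_tendsto_zero]
      have hb : ∀ H : ℕ, dist (∫ ω, S s H ω * ε t ω ∂P) (∫ ω, Y s ω * ε t ω ∂P) ≤
          (eLpNorm (fun ω => S s H ω - Y s ω) 2 P).toReal * (eLpNorm (ε t) 2 P).toReal := by
        intro H
        have hdiff : MemLp (fun ω => S s H ω - Y s ω) 2 P := (hSmem s H).sub (hYL2 s)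
        have h1 : (∫ ω, S s H ω * ε t ω ∂P) - ∫ ω, Y s ω * ε t ω ∂P =
            ∫ ω, (S s H ω - Y s ω) * ε t ω ∂P := by
          rw [← integral_sub (l2_mul_integrable (hSmem s H) (hL2 t))
            (l2_mul_integrable (hYL2 s) (hL2 t))]
          exact integral_congr_ae (Eventually.of_forall fun ω => by ring)
        rw [Real.dist_eq, h1]
        exact l2_abs_integral_mul_le hdiff (hL2 t)
      refine squeeze_zero (fun _ => dist_nonneg) hb ?_
      have h0 : Tendsto (fun H : ℕ =>
          (eLpNorm (fun ω => S s H ω - Y s ω) 2 P).toReal) atTop (nhds 0) := by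
        have := (ENNReal.tendsto_toReal (by simp : (0 : ℝ≥0∞) ≠ ⊤)).comp (hYlim s)
        exact this
      have h1 := h0.mul_const ((eLpNorm (ε t) 2 P).toReal)
      rwa [zero_mul] at h1
    by_cases hts : t ≤ s
    · set n := (s - t).toNat with hn
      have hnz : (n : ℤ) = s - t := Int.toNat_of_nonneg (by omega)
      have hev : ∀ H : ℕ, n ≤ H → ∫ ω, S s H ω * ε t ω ∂P = σ ^ 2 * ψ n := by
        intro H hH
        rw [hSint s t H]
        have hterm : ∀ h ∈ Finset.range (H + 1),
            ψ h * (if (s - (h : ℤ)) = t then σ ^ 2 else 0) =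
            if h = n then σ ^ 2 * ψ n else 0 := by
          intro h _
          by_cases hh : h = n
          · subst hh
            rw [if_pos rfl, if_pos (by omega), mul_comm]
          · rw [if_neg hh, if_neg (by omega), mul_zero]
        rw [Finset.sum_congr rfl hterm, Finset.sum_ite_eq' (Finset.range (H + 1)) n
          (fun _ => σ ^ 2 * ψ n), if_pos (Finset.mem_range.mpr (by omega))]
      have h2 : Tendsto (fun H : ℕ => ∫ ω, S s H ω * ε t ω ∂P) atTop
          (nhds (σ ^ 2 * ψ n)) := by
        refine Tendsto.congr' ?_ tendsto_const_nhds
        filter_upwards [eventually_ge_atTop n] with H hH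
        exact (hev H hH).symm
      rw [if_pos hts]
      exact tendsto_nhds_unique hconv h2
    · have hzero : ∀ H : ℕ, ∫ ω, S s H ω * ε t ω ∂P = 0 := by
        intro H
        rw [hSint s t H]
        refine Finset.sum_eq_zero fun h _ => ?_
        rw [if_neg (by omega), mul_zero]
      rw [if_neg hts]
      refine tendsto_nhds_unique hconv ?_
      simpa [hzero] using (tendsto_const_nhds : Tendsto (fun _ : ℕ => (0:ℝ)) atTop (nhds 0))
  -- rewrite the double sum
  have hLHS : ∑ t ∈ Finset.Icc (1 : ℤ) T, ∑ τ ∈ Finset.Icc (1 : ℤ) T,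
      ∫ ω, Y (τ - k) ω * ε t ω ∂P =
      ∑ p ∈ (Finset.Icc (1 : ℤ) T ×ˢ Finset.Icc (1 : ℤ) T).filter
          (fun p : ℤ × ℤ => p.1 ≤ p.2 - (k : ℤ)),
        σ ^ 2 * ψ (p.2 - k - p.1).toNat := by
    have h1 : ∀ p ∈ (Finset.Icc (1 : ℤ) T ×ˢ Finset.Icc (1 : ℤ) T),
        (∫ ω, Y (p.2 - k) ω * ε p.1 ω ∂P) =
        if p.1 ≤ p.2 - (k : ℤ) then σ ^ 2 * ψ (p.2 - k - p.1).toNat else 0 :=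
      fun p _ => hYeps (p.2 - k) p.1
    rw [← Finset.sum_product', Finset.sum_congr rfl h1, Finset.sum_filter]
  have hRHS : σ ^ 2 * ∑ h ∈ Finset.range (T - k), ((T : ℝ) - k - h) * ψ h =
      ∑ q ∈ (Finset.range (T - k)).sigma (fun h => Finset.range (T - k - h)),
        σ ^ 2 * ψ q.1 := by
    rw [Finset.sum_sigma]
    rw [Finset.mul_sum]
    refine Finset.sum_congr rfl fun h hh => ?_
    rw [Finset.mem_range] at hh
    simp only [Finset.sum_const, Finset.card_range, nsmul_eq_mul]
    have : ((T - k - h : ℕ) : ℝ) = (T : ℝ) - k - h := by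
      have h1 : k + h < T := by omega
      have h2 : (T - k - h : ℕ) = T - (k + h) := by omega
      rw [h2, Nat.cast_sub (by omega : k + h ≤ T)]
      push_cast; ring
    rw [this]; ring
  rw [hLHS, hRHS]
  refine Finset.sum_nbij' (fun p => ⟨(p.2 - k - p.1).toNat, (p.1 - 1).toNat⟩)
    (fun q => ((q.2 : ℤ) + 1, (q.2 : ℤ) + 1 + k + q.1)) ?_ ?_ ?_ ?_ ?_
  · intro p hp
    simp only [Finset.mem_filter, Finset.mem_product, Finset.mem_Icc] at hp
    simp only [Finset.mem_sigma, Finset.mem_range]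
    omega
  · intro q hq
    simp only [Finset.mem_sigma, Finset.mem_range] at hq
    simp only [Finset.mem_filter, Finset.mem_product, Finset.mem_Icc]
    omega
  · intro p hp
    simp only [Finset.mem_filter, Finset.mem_product, Finset.mem_Icc] at hp
    ext <;> simp <;> omega
  · intro q hq
    rcases q with ⟨a, b⟩
    simp only [Finset.mem_sigma, Finset.mem_range] at hq
    simp only [Sigma.mk.inj_iff, heq_eq_eq]
    constructor <;> omega
  · intro p hp
    simp only [Finset.mem_filter, Finset.mem_product, Finset.mem_Icc] at hp
    rfl
end
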